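/- Let q ≥ 1, e ≥ 2, and a be integers, and for i = 1, …, e+1 let V_i be nonzero finite-dimensional complex vector spaces. If there exists an exact complex of sheaves on P^{q-1} of the form 0 → V_{e+1} ⊗ O(-a) → V_e ⊗ O(-a+1) → ⋯ → V_1 ⊗ O(-a+e) → 0 (where each map twists by one), then q ≤ e. -/

import Mathlib

/-!
STATEMENT 0 (Lemma 2.2 (i) of the paper).

We model the category of coherent sheaves on the complex projective space `P^{q-1}`
by an abelian category `C` equipped with a family `O : ℤ → C` of objects (the Serre
twisting sheaves).  The hypothesis `hO` is the standard characterization of the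
(non)vanishing of the groups `Ext^i(O(x), O(y)) ≅ H^i(P^{q-1}, O(y - x))` on
projective `(q-1)`-space: they are nonzero exactly when `i = 0` and `x ≤ y`, or
`i = q - 1` (the top degree) and `y - x ≤ -(q-1)-1`, i.e. `y + q ≤ x`.

The exact complex `0 → V_{e+1} ⊗ O(-a) → ⋯ → V_1 ⊗ O(-a+e) → 0` is encoded as a
cochain complex `K` indexed by `ℕ` whose `i`-th term (for `i ≤ e`) is a biproduct
of `m i = dim V_{e+1-i} ≥ 1` copies of `O(-a+i)`, whose terms vanish in degrees
`> e`, and which is exact at every position (exactness at position `0` of a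
`ℕ`-indexed cochain complex means the first map is a monomorphism, matching the
initial `0 →`).  The conclusion is `q ≤ e`.
-/

open CategoryTheory CategoryTheory.Limits CategoryTheory.Abelian
attribute [local instance] CategoryTheory.Abelian.hasFiniteBiproducts

universe w v u

namespace Stmt0Helpers

variable {C : Type u} [Category.{v} C] [Abelian C] [HasExt.{w} C]

lemma mk0_add {X Y : C} (f g : X ⟶ Y) :
    Ext.mk₀ (f + g) = Ext.mk₀ f + Ext.mk₀ g := by
  letI := HasDerivedCategory.standard C
  apply Ext.ext
  simp only [Ext.mk₀_hom, Ext.add_hom, Functor.map_add]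
  simp [ShiftedHom.mk₀, Preadditive.add_comp]

lemma mk0_sum {X Y : C} {ι : Type*} (s : Finset ι) (f : ι → (X ⟶ Y)) :
    Ext.mk₀ (∑ j ∈ s, f j) = ∑ j ∈ s, Ext.mk₀ (f j) := by
  classical
  induction s using Finset.induction with
  | empty => simp [Ext.mk₀_zero]
  | insert _ _ hns ih => rw [Finset.sum_insert hns, Finset.sum_insert hns, mk0_add, ih]

lemma comp_sum {X Y Z : C} {a b c : ℕ} (h : a + b = c) (α : Ext X Y a)
    {ι : Type*} (s : Finset ι) (β : ι → Ext Y Z b) :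
    α.comp (∑ j ∈ s, β j) h = ∑ j ∈ s, (α.comp (β j) h) := by
  classical
  induction s using Finset.induction with
  | empty => simpa using α.comp_zero Z b c h
  | insert _ _ hns ih => rw [Finset.sum_insert hns, Finset.sum_insert hns, Ext.comp_add, ih]

lemma subsingleton_ext_of_isZero {X Y : C} (h : IsZero Y) (n : ℕ) :
    Subsingleton (Ext X Y n) := by
  have hz : ∀ γ : Ext X Y n, γ = 0 := fun γ => by
    calc γ = γ.comp (Ext.mk₀ (𝟙 Y)) (add_zero n) := (Ext.comp_mk₀_id γ).symm
    _ = γ.comp (Ext.mk₀ (0 : Y ⟶ Y)) (add_zero n) := by rw [h.eq_of_tgt (𝟙 Y) 0]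
    _ = 0 := by rw [Ext.mk₀_zero, Ext.comp_zero]
  exact ⟨fun a b => by rw [hz a, hz b]⟩

lemma subsingleton_ext_biproduct {X Y : C} (m n : ℕ) (h : Subsingleton (Ext X Y n)) :
    Subsingleton (Ext X (⨁ fun _ : Fin m => Y) n) := by
  have hz : ∀ γ : Ext X (⨁ fun _ : Fin m => Y) n, γ = 0 := fun γ => by
    have h1 := (Ext.comp_mk₀_id γ).symm
    rw [← biproduct.total, mk0_sum, comp_sum] at h1
    rw [h1]
    apply Finset.sum_eq_zero
    intro j _
    rw [← Ext.mk₀_comp_mk₀, ← Ext.comp_assoc_of_second_deg_zero]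
    have hπ : γ.comp (Ext.mk₀ (biproduct.π (fun _ : Fin m => Y) j)) (add_zero n) = 0 :=
      @Subsingleton.elim _ h _ _
    rw [hπ, Ext.zero_comp]
  exact ⟨fun a b => by rw [hz a, hz b]⟩

lemma nontrivial_ext_biproduct {X Y : C} {m : ℕ} (hm : 0 < m) (n : ℕ)
    (h : Nontrivial (Ext X Y n)) :
    Nontrivial (Ext X (⨁ fun _ : Fin m => Y) n) := by
  haveI := h
  obtain ⟨ξ, hξ⟩ := exists_ne (0 : Ext X Y n)
  refine ⟨ξ.comp (Ext.mk₀ (biproduct.ι (fun _ : Fin m => Y) ⟨0, hm⟩)) (add_zero n), 0,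
    fun hc => hξ ?_⟩
  have h2 := congrArg (fun γ : Ext X (⨁ fun _ : Fin m => Y) n =>
    γ.comp (Ext.mk₀ (biproduct.π (fun _ : Fin m => Y) ⟨0, hm⟩)) (add_zero n)) hc
  rw [Ext.comp_assoc_of_second_deg_zero, Ext.mk₀_comp_mk₀, biproduct.ι_π_self,
    Ext.comp_mk₀_id, Ext.zero_comp] at h2
  exact h2

lemma nontrivial_ext_of_iso {X Y Y' : C} (e : Y ≅ Y') (n : ℕ)
    (h : Nontrivial (Ext X Y n)) : Nontrivial (Ext X Y' n) := by
  haveI := h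
  obtain ⟨ξ, hξ⟩ := exists_ne (0 : Ext X Y n)
  refine ⟨ξ.comp (Ext.mk₀ e.hom) (add_zero n), 0, fun hc => hξ ?_⟩
  have h2 := congrArg (fun γ : Ext X Y' n => γ.comp (Ext.mk₀ e.inv) (add_zero n)) hc
  rw [Ext.comp_assoc_of_second_deg_zero, Ext.mk₀_comp_mk₀, e.hom_inv_id,
    Ext.comp_mk₀_id, Ext.zero_comp] at h2
  exact h2

lemma subsingleton_X₃ {S : ShortComplex C} (hS : S.ShortExact) (X : C) {n₀ n₁ : ℕ}
    (h : n₀ + 1 = n₁) (h₂ : Subsingleton (Ext X S.X₂ n₀)) (h₁ : Subsingleton (Ext X S.X₁ n₁)) :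
    Subsingleton (Ext X S.X₃ n₀) := by
  have hz : ∀ γ : Ext X S.X₃ n₀, γ = 0 := fun γ => by
    obtain ⟨x₂, hx₂⟩ := Ext.covariant_sequence_exact₃ X hS γ h (@Subsingleton.elim _ h₁ _ _)
    rw [← hx₂, @Subsingleton.elim _ h₂ x₂ 0, Ext.zero_comp]
  exact ⟨fun a b => by rw [hz a, hz b]⟩

lemma step {K : CochainComplex C ℕ} (i : ℕ) (hexact : K.ExactAt (i + 1)) (X : C)
    {n₀ n₁ : ℕ} (h : n₀ + 1 = n₁)
    (h₂ : Subsingleton (Ext X (K.X i) n₀))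
    (h₁ : Subsingleton (Ext X (kernel (K.d i (i + 1))) n₁)) :
    Subsingleton (Ext X (kernel (K.d (i + 1) (i + 2))) n₀) := by
  have hsc : (K.sc' i (i + 1) (i + 2)).Exact :=
    (K.exactAt_iff' i (i + 1) (i + 2)
      ((ComplexShape.up ℕ).prev_eq' rfl) ((ComplexShape.up ℕ).next_eq' rfl)).mp hexact
  have hepi : Epi (kernel.lift (K.d (i + 1) (i + 2)) (K.d i (i + 1))
      (K.d_comp_d i (i + 1) (i + 2))) :=
    (K.sc' i (i + 1) (i + 2)).exact_iff_epi_kernel_lift.mp hsc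
  have hw : kernel.ι (K.d i (i + 1)) ≫ kernel.lift (K.d (i + 1) (i + 2)) (K.d i (i + 1))
      (K.d_comp_d i (i + 1) (i + 2)) = 0 := by
    rw [← cancel_mono (kernel.ι (K.d (i + 1) (i + 2)))]
    simp
  have hker : IsLimit (KernelFork.ofι (kernel.ι (K.d i (i + 1))) hw) := by
    apply KernelFork.IsLimit.ofι'
    intro A k hk
    have hk' : k ≫ K.d i (i + 1) = 0 := by
      have h3 := congrArg (fun t => t ≫ kernel.ι (K.d (i + 1) (i + 2))) hk
      simpa using h3
    exact ⟨kernel.lift _ k hk', kernel.lift_ι _ _ _⟩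
  have hSE : (ShortComplex.mk _ _ hw).ShortExact :=
    ShortComplex.ShortExact.mk' (ShortComplex.exact_of_f_is_kernel _ hker) inferInstance hepi
  exact subsingleton_X₃ hSE X h h₂ h₁

end Stmt0Helpers

theorem stmt0 {C : Type u} [Category.{v} C] [Abelian C] [HasExt.{w} C]
    (q e : ℕ) (a : ℤ) (hq : 1 ≤ q) (he : 2 ≤ e)
    (O : ℤ → C)
    (hO : ∀ (x y : ℤ) (i : ℕ),
      Nontrivial (Ext (O x) (O y) i) ↔ (i = 0 ∧ x ≤ y) ∨ (i = q - 1 ∧ y + (q : ℤ) ≤ x))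
    (m : ℕ → ℕ) (hm : ∀ i, i ≤ e → 0 < m i)
    (K : CochainComplex C ℕ)
    (hK : ∀ i, i ≤ e → K.X i = ⨁ (fun _ : Fin (m i) => O (-a + (i : ℤ))))
    (hK0 : ∀ i, e < i → IsZero (K.X i))
    (hex : ∀ i, K.ExactAt i) :
    q ≤ e := by
  by_contra hqe
  push_neg at hqe
  have extOO : ∀ (x y : ℤ) (i : ℕ),
      ¬ ((i = 0 ∧ x ≤ y) ∨ (i = q - 1 ∧ y + (q : ℤ) ≤ x)) →
      Subsingleton (Ext (O x) (O y) i) :=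
    fun x y i hcond => not_nontrivial_iff_subsingleton.mp (fun hn => hcond ((hO x y i).mp hn))
  have fact1 : ∀ i n, i ≤ e → 1 ≤ n → n ≤ e - 1 →
      Subsingleton (Ext (O (-a + (e : ℤ))) (K.X i) n) := by
    intro i n hi hn1 hn2
    rw [hK i hi]
    refine Stmt0Helpers.subsingleton_ext_biproduct _ _ (extOO _ _ _ ?_)
    rintro (⟨h0, -⟩ | ⟨h0, hle⟩) <;> omega
  have fact2 : Subsingleton (Ext (O (-a + (e : ℤ))) (K.X (e - 1)) 0) := by
    rw [hK (e - 1) (by omega)]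
    refine Stmt0Helpers.subsingleton_ext_biproduct _ _ (extOO _ _ _ ?_)
    rintro (⟨-, hle⟩ | ⟨h0, -⟩) <;> omega
  have hZ0 : IsZero (kernel (K.d 0 1)) := by
    have h0 : (K.sc' 0 0 1).Exact :=
      (K.exactAt_iff' 0 0 1 CochainComplex.prev_nat_zero
        ((ComplexShape.up ℕ).next_eq' rfl)).mp (hex 0)
    haveI : Mono (K.d 0 1) := h0.mono_g (K.shape 0 0 (by simp))
    exact IsZero.of_iso (isZero_zero C) (kernel.ofMono (K.d 0 1))
  have main : ∀ i, i ≤ e - 1 →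
      Subsingleton (Ext (O (-a + (e : ℤ))) (kernel (K.d i (i + 1))) (e - i)) := by
    intro i
    induction i with
    | zero => intro _; exact Stmt0Helpers.subsingleton_ext_of_isZero hZ0 _
    | succ j ih =>
      intro hj
      have h₁ := ih (by omega)
      have h₂ := fact1 j (e - (j + 1)) (by omega) (by omega) (by omega)
      exact Stmt0Helpers.step j (hex (j + 1)) (O (-a + (e : ℤ)))
        (show e - (j + 1) + 1 = e - j by omega) h₂ h₁
  have he1 : e - 1 + 1 = e := by omega
  have he2 : e - 1 + 2 = e + 1 := by omega
  have hfin : Subsingleton (Ext (O (-a + (e : ℤ))) (kernel (K.d e (e + 1))) 0) := by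
    have h₁ : Subsingleton (Ext (O (-a + (e : ℤ))) (kernel (K.d (e - 1) (e - 1 + 1))) 1) := by
      have hmain := main (e - 1) le_rfl
      rw [show e - (e - 1) = 1 by omega] at hmain
      exact hmain
    have hx : K.ExactAt (e - 1 + 1) := by rw [he1]; exact hex e
    have hstep := Stmt0Helpers.step (e - 1) hx (O (-a + (e : ℤ)))
      (show 0 + 1 = 1 by omega) fact2 h₁
    rw [he1, he2] at hstep
    exact hstep
  have hde : K.d e (e + 1) = 0 := (hK0 (e + 1) (by omega)).eq_of_tgt _ _
  have hiso : kernel (K.d e (e + 1)) ≅ K.X e := by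
    refine ⟨kernel.ι _, kernel.lift _ (𝟙 _) (by rw [Category.id_comp, hde]), ?_, ?_⟩
    · rw [← cancel_mono (kernel.ι (K.d e (e + 1))), Category.assoc, kernel.lift_ι,
        Category.comp_id, Category.id_comp]
    · rw [kernel.lift_ι]
  have hnt : Nontrivial (Ext (O (-a + (e : ℤ))) (kernel (K.d e (e + 1))) 0) := by
    apply Stmt0Helpers.nontrivial_ext_of_iso hiso.symm
    have hx : Nontrivial (Ext (O (-a + (e : ℤ))) (K.X e) 0) := by
      rw [hK e le_rfl]
      exact Stmt0Helpers.nontrivial_ext_biproduct (hm e le_rfl) 0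
        ((hO _ _ 0).mpr (Or.inl ⟨rfl, le_rfl⟩))
    exact hx
  haveI := hfin
  haveI := hnt
  exact false_of_nontrivial_of_subsingleton (Ext (O (-a + (e : ℤ))) (kernel (K.d e (e + 1))) 0)
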